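/- Let p be an element of the free noncommutative algebra ℂ⟨x,y⟩ on two generators. If for every positive integer n and every pair of matrices S, T ∈ Mₙ(ℂ) the evaluation of p at (S, T) — i.e. the image of p under the unique ℂ-algebra homomorphism ℂ⟨x,y⟩ → Mₙ(ℂ) sending x ↦ S and y ↦ T — is the zero matrix, then p = 0. Equivalently, no nonzero noncommutative polynomial in two variables over ℂ vanishes identically on all pairs of complex square matrices of all sizes. -/

import Mathlib

open Matrix

noncomputable section NCVanish

namespace NCVanish

/-- Words of length at most `d` over two letters. -/
abbrev W (d : ℕ) := {l : List (Fin 2) // l.length ≤ d}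

instance fintypeW (d : ℕ) : Fintype (W d) :=
  Fintype.ofSurjective
    (fun v : Σ k : Fin (d + 1), (Fin k → Fin 2) =>
      (⟨List.ofFn v.2, by simpa using Nat.lt_succ_iff.mp v.1.2⟩ : W d))
    (fun l => ⟨⟨⟨l.1.length, Nat.lt_succ_of_le l.2⟩, l.1.get⟩, by
      apply Subtype.ext; simp [List.ofFn_get]⟩)

/-- The "left multiplication by letter `i`" matrix. -/
def A (d : ℕ) (i : Fin 2) : Matrix (W d) (W d) ℂ :=
  fun w' w => if w'.1 = i :: w.1 then 1 else 0

lemma nil_le (d : ℕ) : ([] : List (Fin 2)).length ≤ d := by simp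

lemma step {d : ℕ} (i : Fin 2) (l : List (Fin 2)) (h2 : l.length ≤ d)
    (hl : (i :: l).length ≤ d) :
    A d i *ᵥ Pi.single (⟨l, h2⟩ : W d) 1 = Pi.single (⟨i :: l, hl⟩ : W d) 1 := by
  funext w'
  simp only [Matrix.mulVec, dotProduct, Pi.single_apply, mul_ite, mul_one, mul_zero,
    Finset.sum_ite_eq', Finset.mem_univ, if_true, A]
  by_cases hw : w'.1 = i :: l
  · simp [hw, Subtype.ext_iff]
  · simp [hw, Subtype.ext_iff]

lemma key {d : ℕ} : ∀ (l : List (Fin 2)) (hl : l.length ≤ d),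
    (FreeAlgebra.lift ℂ (A d))
        ((FreeAlgebra.equivMonoidAlgebraFreeMonoid (R := ℂ) (X := Fin 2)).symm
          (MonoidAlgebra.single (FreeMonoid.ofList l) 1))
      *ᵥ Pi.single (⟨[], nil_le d⟩ : W d) 1 = Pi.single (⟨l, hl⟩ : W d) 1
  | [], _ => by
    have h1 : FreeMonoid.ofList ([] : List (Fin 2)) = 1 := rfl
    rw [h1]
    have h2 : (MonoidAlgebra.single (1 : FreeMonoid (Fin 2)) (1 : ℂ)) = 1 := rfl
    rw [h2, _root_.map_one, _root_.map_one, Matrix.one_mulVec]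
  | i :: t, hl => by
    have h2 : t.length ≤ d := le_trans (by simp) hl
    have h1 : FreeMonoid.ofList (i :: t) = FreeMonoid.of i * FreeMonoid.ofList t := rfl
    have h3 : (MonoidAlgebra.single (FreeMonoid.of i * FreeMonoid.ofList t) (1 : ℂ))
        = MonoidAlgebra.single (FreeMonoid.of i) 1 * MonoidAlgebra.single (FreeMonoid.ofList t) 1 := by
      rw [MonoidAlgebra.single_mul_single, one_mul]
    have h4 : (FreeAlgebra.equivMonoidAlgebraFreeMonoid (R := ℂ) (X := Fin 2)).symm
        (MonoidAlgebra.single (FreeMonoid.of i) (1 : ℂ)) = FreeAlgebra.ι ℂ i := by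
      apply (FreeAlgebra.equivMonoidAlgebraFreeMonoid (R := ℂ) (X := Fin 2)).injective
      simp [FreeAlgebra.equivMonoidAlgebraFreeMonoid, MonoidAlgebra.of_apply]
    rw [h1, h3, _root_.map_mul, _root_.map_mul, h4, FreeAlgebra.lift_ι_apply, ← Matrix.mulVec_mulVec,
      key t h2, step i t h2 hl]

/-- Evaluation at `A d` applied to the empty-word basis vector, as a linear map. -/
def L (d : ℕ) : FreeAlgebra ℂ (Fin 2) →ₗ[ℂ] (W d → ℂ) where
  toFun p := (FreeAlgebra.lift ℂ (A d)) p *ᵥ Pi.single (⟨[], nil_le d⟩ : W d) 1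
  map_add' p q := by funext v; simp [Matrix.add_mulVec]
  map_smul' c p := by funext v; simp [Matrix.smul_mulVec]

lemma L_single {d : ℕ} (w : FreeMonoid (Fin 2)) (hw : (FreeMonoid.toList w).length ≤ d) :
    L d ((FreeAlgebra.equivMonoidAlgebraFreeMonoid (R := ℂ) (X := Fin 2)).symm
        (MonoidAlgebra.single w 1))
      = Pi.single (⟨FreeMonoid.toList w, hw⟩ : W d) 1 := by
  have h1 : FreeMonoid.ofList (FreeMonoid.toList w) = w := rfl
  show (FreeAlgebra.lift ℂ (A d)) _ *ᵥ _ = _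
  exact key (FreeMonoid.toList w) hw

end NCVanish

open NCVanish in
/-- No nonzero noncommutative polynomial in two variables over ℂ vanishes
identically on all pairs of complex square matrices of all sizes. -/
theorem freeAlgebra_eq_zero_of_vanishing_on_all_matrices
    (p : FreeAlgebra ℂ (Fin 2))
    (h : ∀ n : ℕ, 0 < n → ∀ S T : Matrix (Fin n) (Fin n) ℂ,
      FreeAlgebra.lift ℂ (![S, T]) p = 0) :
    p = 0 := by
  set E := FreeAlgebra.equivMonoidAlgebraFreeMonoid (R := ℂ) (X := Fin 2) with hE
  set q : MonoidAlgebra ℂ (FreeMonoid (Fin 2)) := E p with hq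
  set d : ℕ := q.coeff.support.sup FreeMonoid.length with hd
  set n : ℕ := Fintype.card (W d) with hn
  have hnpos : 0 < n := Fintype.card_pos_iff.mpr ⟨⟨[], nil_le d⟩⟩
  set e : W d ≃ Fin n := Fintype.equivFin (W d) with he
  have hvan : (FreeAlgebra.lift ℂ (A d)) p = 0 := by
    have hcomp : ((Matrix.reindexAlgEquiv ℂ ℂ e).toAlgHom.comp
        (FreeAlgebra.lift ℂ (A d)))
        = FreeAlgebra.lift ℂ (![(Matrix.reindexAlgEquiv ℂ ℂ e) (A d 0),
            (Matrix.reindexAlgEquiv ℂ ℂ e) (A d 1)]) := by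
      apply FreeAlgebra.hom_ext
      funext i
      fin_cases i <;> simp
    have h0 := h n hnpos ((Matrix.reindexAlgEquiv ℂ ℂ e) (A d 0))
      ((Matrix.reindexAlgEquiv ℂ ℂ e) (A d 1))
    rw [← hcomp] at h0
    exact (map_eq_zero_iff _ (Matrix.reindexAlgEquiv ℂ ℂ e).injective).mp (by simpa using h0)
  have hp : p = E.symm q := by rw [hq]; simp
  have hsum : L d p = ∑ w ∈ q.coeff.support, q.coeff w • L d (E.symm (MonoidAlgebra.single w 1)) := by
    have hqs : E.symm q = ∑ w ∈ q.coeff.support, q.coeff w • E.symm (MonoidAlgebra.single w 1) := by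
      conv_lhs => rw [← MonoidAlgebra.sum_coeff_single q]
      rw [Finsupp.sum, map_sum]
      refine Finset.sum_congr rfl fun w hw => ?_
      rw [← _root_.map_smul]
      congr 1
      rw [MonoidAlgebra.smul_single', mul_one]
    rw [hp, hqs, map_sum]
    simp
  have hL0 : L d p = 0 := by
    show (FreeAlgebra.lift ℂ (A d)) p *ᵥ _ = 0
    rw [hvan, Matrix.zero_mulVec]
  have hq0 : q = 0 := by
    ext w₀
    by_cases hw₀ : w₀ ∈ q.coeff.support
    · have hlen : (FreeMonoid.toList w₀).length ≤ d := Finset.le_sup hw₀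
      have hv := congrFun (hL0 ▸ hsum) (⟨FreeMonoid.toList w₀, hlen⟩ : W d)
      rw [Finset.sum_apply] at hv
      have hv' : ∑ w ∈ q.coeff.support,
          (q.coeff w • L d (E.symm (MonoidAlgebra.single w 1))) (⟨FreeMonoid.toList w₀, hlen⟩ : W d)
          = q.coeff w₀ := by
        rw [Finset.sum_eq_single w₀]
        · rw [L_single w₀ hlen]
          simp
        · intro w hw hne
          have hwlen : (FreeMonoid.toList w).length ≤ d := Finset.le_sup hw
          rw [L_single w hwlen]
          have : (⟨FreeMonoid.toList w, hwlen⟩ : W d) ≠ ⟨FreeMonoid.toList w₀, hlen⟩ := by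
            intro hcontra
            exact hne (FreeMonoid.toList.injective (congrArg Subtype.val hcontra))
          simp [Pi.single_apply, this]
        · intro hcontra
          exact absurd hw₀ hcontra
      rw [hv'] at hv
      simpa using hv.symm
    · simpa using Finsupp.notMem_support_iff.mp hw₀
  rw [hp, hq0, map_zero]
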